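/- Let M be a finite set of items, n ≥ 1 an integer, and for each agent i ∈ {1, …, n} let V_i be a monotone submodular valuation on subsets of M with V_i(∅) = 0 and V_i(S) ≥ 0 for every S ⊆ M. Then there exists an allocation A_1, …, A_n of M such that V_i(A_i) ≥ (1/3) · MMS_{V_i}^n(M) for every agent i. -/

import Mathlib

/-- `A` is a partition of the finite set `M` into `r` pairwise disjoint
(possibly empty) bundles whose union is `M`. -/
def IsPartition {ι : Type*} [DecidableEq ι] {r : ℕ} (M : Finset ι) (A : Fin r → Finset ι) : Prop :=
  (∀ i j, i ≠ j → Disjoint (A i) (A j)) ∧ Finset.univ.biUnion A = M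

/-- The maximin share `MMS_f^r(M)`. -/
noncomputable def MMS {ι : Type*} [DecidableEq ι] (M : Finset ι) (f : Finset ι → ℝ) (r : ℕ) : ℝ :=
  sSup { x : ℝ | ∃ A : Fin r → Finset ι, IsPartition M A ∧ x = ⨅ j, f (A j) }

/-- A valuation is submodular. -/
def Submodular {ι : Type*} [DecidableEq ι] (V : Finset ι → ℝ) : Prop :=
  ∀ A B : Finset ι, V (A ∪ B) + V (A ∩ B) ≤ V A + V B

set_option linter.unusedSectionVars false
set_option linter.unnecessarySimpa false
set_option maxHeartbeats 1000000

open Finset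

section Marg
variable {ι : Type*} [DecidableEq ι]

lemma marg_mono {V : Finset ι → ℝ} (hmono : ∀ S T : Finset ι, S ⊆ T → V S ≤ V T)
    (hsub : Submodular V) {S T : Finset ι} (hST : S ⊆ T) (x : ι) :
    V (insert x T) - V T ≤ V (insert x S) - V S := by
  by_cases hx : x ∈ T
  · have h1 : insert x T = T := Finset.insert_eq_self.mpr hx
    have h2 : V S ≤ V (insert x S) := hmono _ _ (Finset.subset_insert _ _)
    rw [h1]; linarith
  · have h := hsub (insert x S) T
    have h1 : insert x S ∪ T = insert x T := by
      ext y
      simp only [Finset.mem_union, Finset.mem_insert]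
      constructor
      · rintro ((rfl | hy) | hy)
        · exact Or.inl rfl
        · exact Or.inr (hST hy)
        · exact Or.inr hy
      · rintro (rfl | hy)
        · exact Or.inl (Or.inl rfl)
        · exact Or.inr hy
    have h2 : insert x S ∩ T = S := by
      ext y
      simp only [Finset.mem_inter, Finset.mem_insert]
      constructor
      · rintro ⟨rfl | hy, hyT⟩
        · exact absurd hyT hx
        · exact hy
      · intro hy; exact ⟨Or.inr hy, hST hy⟩
    rw [h1, h2] at h
    linarith

lemma marg_sum {V : Finset ι → ℝ} (hmono : ∀ S T : Finset ι, S ⊆ T → V S ≤ V T)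
    (hsub : Submodular V) (S : Finset ι) (T : Finset ι) :
    V (S ∪ T) ≤ V S + ∑ x ∈ T, (V (insert x S) - V S) := by
  induction T using Finset.induction_on with
  | empty => simp
  | insert y T hy ih =>
    rw [Finset.sum_insert hy, Finset.union_insert]
    have h := marg_mono hmono hsub (Finset.subset_union_left (s₁ := S) (s₂ := T)) y
    linarith

end Marg

section MMSBasics
variable {ι : Type*} [Fintype ι] [DecidableEq ι]

def mmsSet (M : Finset ι) (V : Finset ι → ℝ) (r : ℕ) : Set ℝ :=
  { x : ℝ | ∃ A : Fin r → Finset ι, IsPartition M A ∧ x = ⨅ j, V (A j) }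

lemma MMS_eq_sSup (M : Finset ι) (V : Finset ι → ℝ) (r : ℕ) :
    MMS M V r = sSup (mmsSet M V r) := rfl

lemma mmsSet_finite (M : Finset ι) (V : Finset ι → ℝ) (r : ℕ) : (mmsSet M V r).Finite := by
  have h : mmsSet M V r ⊆ (fun A : Fin r → Finset ι => ⨅ j, V (A j)) '' Set.univ := by
    rintro x ⟨A, _, rfl⟩; exact ⟨A, trivial, rfl⟩
  exact (Set.finite_univ.image _).subset h

lemma trivialPartition (M : Finset ι) {r : ℕ} (hr : 0 < r) :
    IsPartition M (fun j : Fin r => if j = ⟨0, hr⟩ then M else ∅) := by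
  constructor
  · intro i j hij
    dsimp only
    split_ifs with h1 h2 h2
    · exact absurd (h1.trans h2.symm) hij
    · simp
    · simp
    · simp
  · ext y
    simp only [Finset.mem_biUnion, Finset.mem_univ, true_and]
    constructor
    · rintro ⟨j, hj⟩
      split_ifs at hj with h
      · exact hj
      · exact absurd hj (Finset.notMem_empty y)
    · intro hy; exact ⟨⟨0, hr⟩, by simp [hy]⟩

lemma mmsSet_nonempty (M : Finset ι) (V : Finset ι → ℝ) {r : ℕ} (hr : 0 < r) :
    (mmsSet M V r).Nonempty :=
  ⟨_, _, trivialPartition M hr, rfl⟩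

lemma le_MMS {M : Finset ι} {V : Finset ι → ℝ} {r : ℕ} {A : Fin r → Finset ι}
    (hA : IsPartition M A) : (⨅ j, V (A j)) ≤ MMS M V r :=
  le_csSup (mmsSet_finite M V r).bddAbove ⟨A, hA, rfl⟩

lemma MMS_attained (M : Finset ι) (V : Finset ι → ℝ) {r : ℕ} (hr : 0 < r) :
    ∃ A : Fin r → Finset ι, IsPartition M A ∧ MMS M V r = ⨅ j, V (A j) :=
  (mmsSet_nonempty M V hr).csSup_mem (mmsSet_finite M V r)

lemma MMS_nonneg (M : Finset ι) {V : Finset ι → ℝ} {r : ℕ} (hr : 0 < r)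
    (hV : ∀ S, 0 ≤ V S) : 0 ≤ MMS M V r := by
  haveI : Nonempty (Fin r) := ⟨⟨0, hr⟩⟩
  refine le_trans ?_ (le_MMS (V := V) (trivialPartition M hr))
  exact le_ciInf fun j => hV _

lemma part_subset {M : Finset ι} {r : ℕ} {A : Fin r → Finset ι}
    (hA : IsPartition M A) (j : Fin r) : A j ⊆ M := by
  rw [← hA.2]
  exact Finset.subset_biUnion_of_mem A (Finset.mem_univ j)

lemma MMS_le_self {M : Finset ι} {V : Finset ι → ℝ} {r : ℕ} (hr : 0 < r)
    (hmono : ∀ S T : Finset ι, S ⊆ T → V S ≤ V T) : MMS M V r ≤ V M := by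
  refine csSup_le (mmsSet_nonempty M V hr) ?_
  rintro x ⟨A, hA, rfl⟩
  refine le_trans (ciInf_le (Set.finite_range _).bddBelow ⟨0, hr⟩) ?_
  exact hmono _ _ (part_subset hA _)

lemma MMS_le_erase {n : ℕ} (hn : 0 < n) {M : Finset ι} {x : ι} (hx : x ∈ M)
    {V : Finset ι → ℝ} (hmono : ∀ S T : Finset ι, S ⊆ T → V S ≤ V T) :
    MMS M V (n + 1) ≤ MMS (M.erase x) V n := by
  obtain ⟨P, hP, hPval⟩ := MMS_attained M V (Nat.succ_pos n)
  have hx' : x ∈ Finset.univ.biUnion P := by rw [hP.2]; exact hx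
  obtain ⟨j0, -, hj0⟩ := Finset.mem_biUnion.mp hx'
  set d : Fin n := ⟨0, hn⟩ with hd
  set Q : Fin n → Finset ι :=
    fun k => if k = d then ((P j0).erase x) ∪ P (j0.succAbove k) else P (j0.succAbove k) with hQ
  have hQsub : ∀ k, P (j0.succAbove k) ⊆ Q k := by
    intro k
    by_cases h : k = d <;> simp [hQ, h]
  have hPd : ∀ k, Disjoint ((P j0).erase x) (P (j0.succAbove k)) := fun k =>
    Finset.disjoint_of_subset_left (Finset.erase_subset _ _)
      (hP.1 _ _ (Fin.succAbove_ne j0 k).symm)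
  have hdisj : ∀ a b : Fin n, a ≠ b → Disjoint (Q a) (Q b) := by
    intro a b hab
    have h1 : Disjoint (P (j0.succAbove a)) (P (j0.succAbove b)) :=
      hP.1 _ _ (fun h => hab (Fin.succAbove_right_injective h))
    rw [hQ]
    dsimp only
    split_ifs with ha hb hb
    · exact absurd (ha.trans hb.symm) hab
    · exact Finset.disjoint_union_left.mpr ⟨hPd b, h1⟩
    · exact Finset.disjoint_union_right.mpr ⟨(hPd a).symm, h1⟩
    · exact h1
  have hQpart : IsPartition (M.erase x) Q := by
    constructor
    · exact hdisj
    · ext y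
      simp only [Finset.mem_biUnion, Finset.mem_univ, true_and]
      constructor
      · rintro ⟨k, hk⟩
        have hyk : y ∈ ((P j0).erase x) ∪ P (j0.succAbove k) := by
          by_cases h : k = d
          · rw [hQ] at hk; simp only [h, if_pos rfl] at hk; simpa [h] using hk
          · rw [hQ] at hk; simp only [if_neg h] at hk; exact Finset.mem_union_right _ hk
        rcases Finset.mem_union.mp hyk with hy | hy
        · exact Finset.mem_erase.mpr ⟨(Finset.mem_erase.mp hy).1,
            part_subset hP j0 (Finset.mem_erase.mp hy).2⟩
        · refine Finset.mem_erase.mpr ⟨?_, part_subset hP _ hy⟩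
          rintro rfl
          exact (Finset.disjoint_left.mp (hP.1 _ _ (Fin.succAbove_ne j0 k))) hy hj0
      · intro hy
        obtain ⟨hyx, hyM⟩ := Finset.mem_erase.mp hy
        have : y ∈ Finset.univ.biUnion P := by rw [hP.2]; exact hyM
        obtain ⟨j, -, hj⟩ := Finset.mem_biUnion.mp this
        by_cases hjj : j = j0
        · refine ⟨d, ?_⟩
          rw [hQ]; simp only [if_pos rfl]
          exact Finset.mem_union_left _ (Finset.mem_erase.mpr ⟨hyx, hjj ▸ hj⟩)
        · obtain ⟨k, hk⟩ := Fin.exists_succAbove_eq (x := j) (y := j0) hjj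
          refine ⟨k, hQsub k ?_⟩
          rw [hk]; exact hj
  have h2 : MMS M V (n + 1) ≤ ⨅ k, V (Q k) := by
    rw [hPval]
    haveI : Nonempty (Fin n) := ⟨d⟩
    refine le_ciInf fun k => ?_
    refine le_trans (ciInf_le (Set.finite_range _).bddBelow (j0.succAbove k)) ?_
    exact hmono _ _ (hQsub k)
  exact h2.trans (le_MMS hQpart)

end MMSBasics

lemma arith_aux {n av iv t : ℕ} (hn : 0 < n) (hav : av < n) (hiv : iv < n)
    (ht : t % n = av) (hc : (if iv < av then av - iv else av + n - iv) ≤ t) :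
    (t - (if iv < av then av - iv else av + n - iv)) % n = iv := by
  obtain ⟨q, hq⟩ : ∃ q, t = q * n + av :=
    ⟨t / n, by conv_lhs => rw [← Nat.div_add_mod t n]; rw [ht, Nat.mul_comm]⟩
  have key : ∃ p, t - (if iv < av then av - iv else av + n - iv) = p * n + iv := by
    split_ifs with hcase
    · exact ⟨q, by generalize q * n = Q at hq; omega⟩
    · cases q with
      | zero =>
        exfalso
        simp only [Nat.zero_mul, Nat.zero_add] at hq
        simp only [if_neg hcase] at hc
        omega
      | succ q =>
        refine ⟨q, ?_⟩
        have hmul : (q + 1) * n = q * n + n := by ring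
        rw [hmul] at hq
        simp only [if_neg hcase] at hc
        generalize q * n = Q at hq hc ⊢
        omega
  obtain ⟨p, key⟩ := key
  rw [key, Nat.add_comm, Nat.add_mul_mod_self_right, Nat.mod_eq_of_lt hiv]

section Greedy
variable {ι : Type*} [Fintype ι] [DecidableEq ι] {n : ℕ}

noncomputable def gStep (hn : 0 < n) (M : Finset ι) (V : Fin n → Finset ι → ℝ)
    (t : ℕ) (A : Fin n → Finset ι) : Fin n → Finset ι :=
  if h : (M \ Finset.univ.biUnion A).Nonempty then
    Function.update A ⟨t % n, Nat.mod_lt t hn⟩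
      (insert
        ((M \ Finset.univ.biUnion A).exists_max_image
          (fun y => V ⟨t % n, Nat.mod_lt t hn⟩
            (insert y (A ⟨t % n, Nat.mod_lt t hn⟩))) h).choose
        (A ⟨t % n, Nat.mod_lt t hn⟩))
  else A

noncomputable def gState (hn : 0 < n) (M : Finset ι) (V : Fin n → Finset ι → ℝ) :
    ℕ → Fin n → Finset ι
  | 0 => fun _ => ∅
  | t + 1 => gStep hn M V t (gState hn M V t)

variable (hn : 0 < n) (M : Finset ι) (V : Fin n → Finset ι → ℝ)

lemma gState_succ (t : ℕ) : gState hn M V (t + 1) = gStep hn M V t (gState hn M V t) := rfl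

lemma gStep_char (t : ℕ) (h : (M \ Finset.univ.biUnion (gState hn M V t)).Nonempty) :
    ∃ x ∈ M \ Finset.univ.biUnion (gState hn M V t),
      gState hn M V (t + 1) = Function.update (gState hn M V t) ⟨t % n, Nat.mod_lt t hn⟩
        (insert x (gState hn M V t ⟨t % n, Nat.mod_lt t hn⟩)) ∧
      ∀ y ∈ M \ Finset.univ.biUnion (gState hn M V t),
        V ⟨t % n, Nat.mod_lt t hn⟩ (insert y (gState hn M V t ⟨t % n, Nat.mod_lt t hn⟩)) ≤
        V ⟨t % n, Nat.mod_lt t hn⟩ (insert x (gState hn M V t ⟨t % n, Nat.mod_lt t hn⟩)) := by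
  have hspec := ((M \ Finset.univ.biUnion (gState hn M V t)).exists_max_image
    (fun y => V ⟨t % n, Nat.mod_lt t hn⟩
      (insert y (gState hn M V t ⟨t % n, Nat.mod_lt t hn⟩))) h).choose_spec
  refine ⟨_, hspec.1, ?_, hspec.2⟩
  rw [gState_succ, gStep, dif_pos h]

lemma gStep_char' (t : ℕ) (h : ¬ (M \ Finset.univ.biUnion (gState hn M V t)).Nonempty) :
    gState hn M V (t + 1) = gState hn M V t := by
  rw [gState_succ, gStep, dif_neg h]

lemma gState_subset_succ (t : ℕ) (j : Fin n) :
    gState hn M V t j ⊆ gState hn M V (t + 1) j := by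
  by_cases h : (M \ Finset.univ.biUnion (gState hn M V t)).Nonempty
  · obtain ⟨x, -, hstep, -⟩ := gStep_char hn M V t h
    rw [hstep]
    rcases eq_or_ne j ⟨t % n, Nat.mod_lt t hn⟩ with rfl | hj
    · rw [Function.update_self]; exact Finset.subset_insert _ _
    · rw [Function.update_of_ne hj]
  · rw [gStep_char' hn M V t h]

lemma gState_mono {t t' : ℕ} (h : t ≤ t') (j : Fin n) :
    gState hn M V t j ⊆ gState hn M V t' j := by
  induction t', h using Nat.le_induction with
  | base => exact Finset.Subset.refl _
  | succ t' ht' ih => exact ih.trans (gState_subset_succ hn M V t' j)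

lemma gState_subset_M (t : ℕ) : ∀ j : Fin n, gState hn M V t j ⊆ M := by
  induction t with
  | zero => intro j; simp [gState]
  | succ t ih =>
    intro j
    by_cases h : (M \ Finset.univ.biUnion (gState hn M V t)).Nonempty
    · obtain ⟨x, hx, hstep, -⟩ := gStep_char hn M V t h
      rw [hstep]
      rcases eq_or_ne j ⟨t % n, Nat.mod_lt t hn⟩ with rfl | hj
      · rw [Function.update_self]
        exact Finset.insert_subset (Finset.mem_sdiff.mp hx).1 (ih _)
      · rw [Function.update_of_ne hj]; exact ih j
    · rw [gStep_char' hn M V t h]; exact ih j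

lemma gState_disjoint (t : ℕ) : ∀ j k : Fin n, j ≠ k →
    Disjoint (gState hn M V t j) (gState hn M V t k) := by
  induction t with
  | zero => intro j k _; simp [gState]
  | succ t ih =>
    intro j k hjk
    by_cases h : (M \ Finset.univ.biUnion (gState hn M V t)).Nonempty
    · obtain ⟨x, hx, hstep, -⟩ := gStep_char hn M V t h
      have hxnot : ∀ j' : Fin n, x ∉ gState hn M V t j' := by
        intro j' hx'
        exact (Finset.mem_sdiff.mp hx).2 (Finset.mem_biUnion.mpr ⟨j', Finset.mem_univ _, hx'⟩)
      rw [hstep]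
      set a : Fin n := ⟨t % n, Nat.mod_lt t hn⟩
      rcases eq_or_ne j a with rfl | hj
      · rw [Function.update_self, Function.update_of_ne (Ne.symm hjk)]
        exact Finset.disjoint_insert_left.mpr ⟨hxnot k, ih _ _ hjk⟩
      · rw [Function.update_of_ne hj]
        rcases eq_or_ne k a with rfl | hk
        · rw [Function.update_self]
          exact Finset.disjoint_insert_right.mpr ⟨hxnot j, ih _ _ hjk⟩
        · rw [Function.update_of_ne hk]; exact ih _ _ hjk
    · rw [gStep_char' hn M V t h]; exact ih _ _ hjk

lemma biUnion_update_insert (A : Fin n → Finset ι) (a : Fin n) (x : ι) :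
    Finset.univ.biUnion (Function.update A a (insert x (A a))) =
      insert x (Finset.univ.biUnion A) := by
  ext y
  simp only [Finset.mem_biUnion, Finset.mem_univ, true_and, Finset.mem_insert]
  constructor
  · rintro ⟨j, hj⟩
    rcases eq_or_ne j a with rfl | hja
    · rw [Function.update_self] at hj
      rcases Finset.mem_insert.mp hj with rfl | hj
      · exact Or.inl rfl
      · exact Or.inr ⟨j, hj⟩
    · rw [Function.update_of_ne hja] at hj
      exact Or.inr ⟨j, hj⟩
  · rintro (rfl | ⟨j, hj⟩)
    · exact ⟨a, by rw [Function.update_self]; exact Finset.mem_insert_self _ _⟩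
    · rcases eq_or_ne j a with rfl | hja
      · exact ⟨j, by rw [Function.update_self]; exact Finset.mem_insert_of_mem hj⟩
      · exact ⟨j, by rw [Function.update_of_ne hja]; exact hj⟩

lemma gState_card (t : ℕ) :
    (Finset.univ.biUnion (gState hn M V t)).card = min t M.card := by
  induction t with
  | zero =>
    have : Finset.univ.biUnion (gState hn M V 0) = (∅ : Finset ι) := by
      ext y; simp [gState]
    simp [this]
  | succ t ih =>
    have hsub : Finset.univ.biUnion (gState hn M V t) ⊆ M :=
      Finset.biUnion_subset.mpr (fun j _ => gState_subset_M hn M V t j)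
    have hcard : (M \ Finset.univ.biUnion (gState hn M V t)).card = M.card - min t M.card := by
      rw [Finset.card_sdiff_of_subset hsub, ih]
    by_cases h : (M \ Finset.univ.biUnion (gState hn M V t)).Nonempty
    · have hpos : 0 < M.card - min t M.card := by
        rw [← hcard]; exact Finset.card_pos.mpr h
      have htm : t < M.card := by omega
      obtain ⟨x, hx, hstep, -⟩ := gStep_char hn M V t h
      rw [hstep, biUnion_update_insert]
      rw [Finset.card_insert_of_notMem (Finset.mem_sdiff.mp hx).2, ih]
      omega
    · have hzero : M.card - min t M.card = 0 := by
        rw [← hcard]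
        simpa [Finset.not_nonempty_iff_eq_empty.mp h] using rfl
      rw [gStep_char' hn M V t h, ih]
      omega

lemma gState_R_nonempty_iff (t : ℕ) :
    (M \ Finset.univ.biUnion (gState hn M V t)).Nonempty ↔ t < M.card := by
  have hsub : Finset.univ.biUnion (gState hn M V t) ⊆ M :=
    Finset.biUnion_subset.mpr (fun j _ => gState_subset_M hn M V t j)
  rw [← Finset.card_pos, Finset.card_sdiff_of_subset hsub, gState_card]
  omega

include hn in
lemma phase2 (hzero : ∀ i, V i ∅ = 0) (hnonneg : ∀ i (S : Finset ι), 0 ≤ V i S)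
    (hmono : ∀ i, ∀ S T : Finset ι, S ⊆ T → V i S ≤ V i T)
    (hsubm : ∀ i, Submodular (V i))
    (hsmall : ∀ i, ∀ x ∈ M, V i {x} ≤ MMS M (V i) n / 3) :
    ∃ A : Fin n → Finset ι, IsPartition M A ∧ ∀ i, MMS M (V i) n / 3 ≤ V i (A i) := by
  classical
  set m := M.card with hm
  set G := gState hn M V with hG
  have hpart : IsPartition M (G m) := by
    constructor
    · exact fun j k h => gState_disjoint hn M V m j k h
    · have hsub : Finset.univ.biUnion (G m) ⊆ M :=
        Finset.biUnion_subset.mpr (fun j _ => gState_subset_M hn M V m j)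
      have hcard : (Finset.univ.biUnion (G m)).card = m := by
        have := gState_card hn M V m
        simpa [hm] using this
      exact Finset.eq_of_subset_of_card_le hsub (by rw [hcard])
  refine ⟨G m, hpart, ?_⟩
  intro i
  set μ := MMS M (V i) n with hμ
  have hμ0 : 0 ≤ μ := MMS_nonneg M hn (hnonneg i)
  set S := G m i with hS
  have hVS0 : 0 ≤ V i S := hnonneg i S
  set Δ : ℕ → ℝ := fun t => V i (G (t + 1) i) - V i (G t i) with hΔ
  have hΔ0 : ∀ t, 0 ≤ Δ t := by
    intro t
    have := hmono i _ _ (gState_subset_succ hn M V t i)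
    simp only [hΔ]
    linarith
  have hΔsum : ∑ t ∈ Finset.range m, Δ t = V i S := by
    have h0 : G 0 i = ∅ := rfl
    have := Finset.sum_range_sub (fun t => V i (G t i)) m
    simp only [hΔ]
    rw [this, h0, hzero i, sub_zero]
  -- claim B : per-opponent bound
  have claimB : ∀ a : Fin n, a ≠ i →
      ∑ x ∈ G m a, (V i (insert x S) - V i S) ≤ μ / 3 + V i S := by
    intro a ha
    have htex : ∀ x ∈ G m a, ∃ t, x ∈ gState hn M V (t + 1) a := by
      intro x hx
      exact ⟨m, gState_subset_succ hn M V m a hx⟩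
    set tOf : ι → ℕ := fun x =>
      if h : ∃ t, x ∈ gState hn M V (t + 1) a then Nat.find h else 0 with htOf
    have htOfeq : ∀ x (hx : x ∈ G m a), tOf x = Nat.find (htex x hx) := by
      intro x hx
      exact dif_pos (htex x hx)
    have tmem : ∀ x (hx : x ∈ G m a), x ∈ gState hn M V (tOf x + 1) a := by
      intro x hx
      rw [htOfeq x hx]
      exact Nat.find_spec (htex x hx)
    have tmin : ∀ x (hx : x ∈ G m a) (s : ℕ), s ≤ tOf x → x ∉ gState hn M V s a := by
      intro x hx s hs hmem
      cases s with
      | zero => simp [gState] at hmem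
      | succ u =>
        have hle : tOf x ≤ u := by
          rw [htOfeq x hx]
          exact Nat.find_le hmem
        omega
    have tlt : ∀ x (hx : x ∈ G m a), tOf x < m := by
      intro x hx
      by_cases hne : (M \ Finset.univ.biUnion (gState hn M V (tOf x))).Nonempty
      · exact (gState_R_nonempty_iff hn M V (tOf x)).mp hne
      · exfalso
        have heq := gStep_char' hn M V (tOf x) hne
        have := tmem x hx
        rw [heq] at this
        exact tmin x hx (tOf x) le_rfl this
    have tnotinbi : ∀ x (hx : x ∈ G m a) (s : ℕ), s ≤ tOf x →
        x ∉ Finset.univ.biUnion (gState hn M V s) := by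
      intro x hx s hs hmem
      obtain ⟨j, -, hj⟩ := Finset.mem_biUnion.mp hmem
      rcases eq_or_ne j a with rfl | hja
      · exact tmin x hx s hs hj
      · have hsm : s ≤ m := le_of_lt (lt_of_le_of_lt hs (tlt x hx))
        have h1 : x ∈ gState hn M V m j := gState_mono hn M V hsm j hj
        exact (Finset.disjoint_left.mp (gState_disjoint hn M V m j a hja)) h1 hx
    have tmod : ∀ x (hx : x ∈ G m a), tOf x % n = a.val := by
      intro x hx
      have hR : (M \ Finset.univ.biUnion (gState hn M V (tOf x))).Nonempty :=
        (gState_R_nonempty_iff hn M V (tOf x)).mpr (tlt x hx)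
      obtain ⟨z, hz, hstep, -⟩ := gStep_char hn M V (tOf x) hR
      by_contra hne
      have hne' : a ≠ (⟨tOf x % n, Nat.mod_lt _ hn⟩ : Fin n) := by
        intro h
        exact hne (congrArg Fin.val h).symm
      have heq : gState hn M V (tOf x + 1) a = gState hn M V (tOf x) a := by
        rw [hstep, Function.update_of_ne hne']
      have := tmem x hx
      rw [heq] at this
      exact tmin x hx (tOf x) le_rfl this
    have tinj : ∀ x (hx : x ∈ G m a) y (hy : y ∈ G m a), tOf x = tOf y → x = y := by
      intro x hx y hy heq
      have hR : (M \ Finset.univ.biUnion (gState hn M V (tOf x))).Nonempty :=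
        (gState_R_nonempty_iff hn M V (tOf x)).mpr (tlt x hx)
      obtain ⟨z, hz, hstep, -⟩ := gStep_char hn M V (tOf x) hR
      have ha' : (⟨tOf x % n, Nat.mod_lt _ hn⟩ : Fin n) = a := Fin.ext (tmod x hx)
      rw [ha'] at hstep
      have hmem : ∀ w, w ∈ G m a → tOf w = tOf x →
          w ∈ insert z (gState hn M V (tOf x) a) := by
        intro w hw hwt
        have h1 := tmem w hw
        rw [hwt] at h1
        rw [hstep, Function.update_self] at h1
        exact h1
      have hxz : x = z := by
        rcases Finset.mem_insert.mp (hmem x hx rfl) with h | h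
        · exact h
        · exact absurd h (tmin x hx (tOf x) le_rfl)
      have hyz : y = z := by
        rcases Finset.mem_insert.mp (hmem y hy heq.symm) with h | h
        · exact h
        · exfalso
          have := tmin y hy (tOf y) le_rfl
          rw [← heq] at this
          exact this h
      rw [hxz, hyz]
    set c : ℕ := if i.val < a.val then a.val - i.val else a.val + n - i.val with hc
    have hcval : i.val ≠ a.val := fun h => ha (Fin.ext h.symm)
    have hc1 : 1 ≤ c := by
      have h1 := a.isLt
      have h2 := i.isLt
      rw [hc]
      split_ifs <;> omega
    have hcn : c ≤ n := by
      have h1 := a.isLt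
      have h2 := i.isLt
      rw [hc]
      split_ifs <;> omega
    -- the greedy key bound
    have hkey : ∀ x (hx : x ∈ G m a), c ≤ tOf x →
        V i (insert x S) - V i S ≤ Δ (tOf x - c) := by
      intro x hx hcx
      have hmod : (tOf x - c) % n = i.val := by
        rw [hc]
        exact arith_aux hn a.isLt i.isLt (tmod x hx) (by rw [← hc]; exact hcx)
      have hψlt : tOf x - c < m := lt_of_le_of_lt (Nat.sub_le _ _) (tlt x hx)
      have hR : (M \ Finset.univ.biUnion (gState hn M V (tOf x - c))).Nonempty :=
        (gState_R_nonempty_iff hn M V (tOf x - c)).mpr hψlt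
      obtain ⟨z, hz, hstep, hgreedy⟩ := gStep_char hn M V (tOf x - c) hR
      have hi' : (⟨(tOf x - c) % n, Nat.mod_lt _ hn⟩ : Fin n) = i := Fin.ext hmod
      rw [hi'] at hstep hgreedy
      have hxR : x ∈ M \ Finset.univ.biUnion (gState hn M V (tOf x - c)) :=
        Finset.mem_sdiff.mpr ⟨gState_subset_M hn M V m a hx,
          tnotinbi x hx (tOf x - c) (Nat.sub_le _ _)⟩
      have hg := hgreedy x hxR
      have hnew : gState hn M V (tOf x - c + 1) i =
          insert z (gState hn M V (tOf x - c) i) := by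
        rw [hstep, Function.update_self]
      have hsub : gState hn M V (tOf x - c) i ⊆ S :=
        gState_mono hn M V (le_of_lt hψlt) i
      have h1 : V i (insert x S) - V i S ≤
          V i (insert x (gState hn M V (tOf x - c) i)) -
            V i (gState hn M V (tOf x - c) i) :=
        marg_mono (hmono i) (hsubm i) hsub x
      have h2 : Δ (tOf x - c) =
          V i (gState hn M V (tOf x - c + 1) i) - V i (gState hn M V (tOf x - c) i) := rfl
      rw [h2, hnew]
      linarith
    have hsent : ∀ x (hx : x ∈ G m a), V i (insert x S) - V i S ≤ V i {x} := by
      intro x hx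
      have := marg_mono (hmono i) (hsubm i) (Finset.empty_subset S) x
      have hins : insert x (∅ : Finset ι) = {x} := rfl
      rw [hins, hzero i] at this
      linarith
    have hfg : ∀ x ∈ G m a, V i (insert x S) - V i S ≤
        (if tOf x < c then μ / 3 else Δ (tOf x - c)) := by
      intro x hx
      split_ifs with h
      · exact (hsent x hx).trans (hsmall i x (gState_subset_M hn M V m a hx))
      · exact hkey x hx (le_of_not_gt h)
    have step1 : ∑ x ∈ G m a, (V i (insert x S) - V i S) ≤
        ∑ x ∈ G m a, (if tOf x < c then μ / 3 else Δ (tOf x - c)) :=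
      Finset.sum_le_sum hfg
    rw [Finset.sum_ite] at step1
    have hcard1 : ((G m a).filter fun x => tOf x < c).card ≤ 1 := by
      rw [Finset.card_le_one]
      intro x hx' y hy'
      obtain ⟨hx, hxc⟩ := Finset.mem_filter.mp hx'
      obtain ⟨hy, hyc⟩ := Finset.mem_filter.mp hy'
      apply tinj x hx y hy
      have h1 : tOf x = a.val := by
        have hlt : tOf x < n := lt_of_lt_of_le hxc hcn
        rw [← Nat.mod_eq_of_lt hlt]
        exact tmod x hx
      have h2 : tOf y = a.val := by
        have hlt : tOf y < n := lt_of_lt_of_le hyc hcn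
        rw [← Nat.mod_eq_of_lt hlt]
        exact tmod y hy
      rw [h1, h2]
    have part1 : ∑ _x ∈ (G m a).filter (fun x => tOf x < c), (μ / 3) ≤ μ / 3 := by
      rw [Finset.sum_const, nsmul_eq_mul]
      have hcast : (((G m a).filter fun x => tOf x < c).card : ℝ) ≤ 1 := by
        exact_mod_cast hcard1
      nlinarith
    have part2 : ∑ x ∈ (G m a).filter (fun x => ¬ tOf x < c), Δ (tOf x - c) ≤ V i S := by
      have hinj2 : ∀ x ∈ (G m a).filter (fun x => ¬ tOf x < c),
          ∀ y ∈ (G m a).filter (fun x => ¬ tOf x < c), tOf x - c = tOf y - c → x = y := by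
        intro x hx' y hy' heq
        obtain ⟨hx, hxc⟩ := Finset.mem_filter.mp hx'
        obtain ⟨hy, hyc⟩ := Finset.mem_filter.mp hy'
        exact tinj x hx y hy (by omega)
      have himg : ∑ x ∈ (G m a).filter (fun x => ¬ tOf x < c), Δ (tOf x - c) =
          ∑ t ∈ ((G m a).filter (fun x => ¬ tOf x < c)).image (fun x => tOf x - c), Δ t :=
        (Finset.sum_image hinj2).symm
      rw [himg, ← hΔsum]
      apply Finset.sum_le_sum_of_subset_of_nonneg
      · intro t ht
        obtain ⟨x, hx', rfl⟩ := Finset.mem_image.mp ht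
        obtain ⟨hx, -⟩ := Finset.mem_filter.mp hx'
        exact Finset.mem_range.mpr (lt_of_le_of_lt (Nat.sub_le _ _) (tlt x hx))
      · intro t _ _
        exact hΔ0 t
    linarith
  -- step C : total bound over all opponents
  have hMS : M \ S = (Finset.univ.erase i).biUnion (G m) := by
    ext y
    constructor
    · intro hy
      obtain ⟨hyM, hynS⟩ := Finset.mem_sdiff.mp hy
      have : y ∈ Finset.univ.biUnion (G m) := by rw [hpart.2]; exact hyM
      obtain ⟨j, -, hj⟩ := Finset.mem_biUnion.mp this
      have hji : j ≠ i := by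
        rintro rfl
        exact hynS hj
      exact Finset.mem_biUnion.mpr ⟨j, Finset.mem_erase.mpr ⟨hji, Finset.mem_univ j⟩, hj⟩
    · intro hy
      obtain ⟨j, hj', hj⟩ := Finset.mem_biUnion.mp hy
      obtain ⟨hji, -⟩ := Finset.mem_erase.mp hj'
      refine Finset.mem_sdiff.mpr ⟨gState_subset_M hn M V m j hj, fun hyS => ?_⟩
      exact (Finset.disjoint_left.mp (gState_disjoint hn M V m j i hji)) hj hyS
  have hC : ∑ x ∈ M \ S, (V i (insert x S) - V i S) ≤
      ((n - 1 : ℕ) : ℝ) * (μ / 3 + V i S) := by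
    rw [hMS]
    rw [Finset.sum_biUnion]
    · calc ∑ a ∈ Finset.univ.erase i, ∑ x ∈ G m a, (V i (insert x S) - V i S)
          ≤ ∑ a ∈ Finset.univ.erase i, (μ / 3 + V i S) :=
            Finset.sum_le_sum (fun a ha => claimB a (Finset.mem_erase.mp ha).1)
        _ = ((n - 1 : ℕ) : ℝ) * (μ / 3 + V i S) := by
            rw [Finset.sum_const, nsmul_eq_mul, Finset.card_erase_of_mem (Finset.mem_univ i),
              Finset.card_univ, Fintype.card_fin]
    · intro a _ b _ hab
      exact gState_disjoint hn M V m a b hab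
  -- step D : choose the least-damaged MMS part
  obtain ⟨P, hPpart, hPval⟩ := MMS_attained M (V i) hn
  obtain ⟨j, -, hjmin⟩ := Finset.exists_min_image Finset.univ
    (fun j => ∑ x ∈ P j \ S, (V i (insert x S) - V i S)) ⟨i, Finset.mem_univ i⟩
  have hbi : Finset.univ.biUnion (fun j => P j \ S) = M \ S := by
    ext y
    simp only [Finset.mem_biUnion, Finset.mem_univ, true_and, Finset.mem_sdiff]
    constructor
    · rintro ⟨k, hk1, hk2⟩
      refine ⟨?_, hk2⟩
      rw [← hPpart.2]
      exact Finset.mem_biUnion.mpr ⟨k, Finset.mem_univ k, hk1⟩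
    · rintro ⟨hyM, hyS⟩
      have : y ∈ Finset.univ.biUnion P := by rw [hPpart.2]; exact hyM
      obtain ⟨k, -, hk⟩ := Finset.mem_biUnion.mp this
      exact ⟨k, hk, hyS⟩
  have hsumP : ∑ j' : Fin n, ∑ x ∈ P j' \ S, (V i (insert x S) - V i S) =
      ∑ x ∈ M \ S, (V i (insert x S) - V i S) := by
    rw [← hbi]
    refine (Finset.sum_biUnion ?_).symm
    intro a _ b _ hab
    exact Finset.disjoint_of_subset_left (Finset.sdiff_subset)
      (Finset.disjoint_of_subset_right (Finset.sdiff_subset) (hPpart.1 a b hab))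
  have hnW : (n : ℝ) * (∑ x ∈ P j \ S, (V i (insert x S) - V i S)) ≤
      ∑ j' : Fin n, ∑ x ∈ P j' \ S, (V i (insert x S) - V i S) := by
    have := Finset.card_nsmul_le_sum Finset.univ
      (fun j' => ∑ x ∈ P j' \ S, (V i (insert x S) - V i S))
      (∑ x ∈ P j \ S, (V i (insert x S) - V i S))
      (fun j' _ => hjmin j' (Finset.mem_univ j'))
    simpa [Finset.card_univ, Fintype.card_fin, nsmul_eq_mul] using this
  have hW : ∑ x ∈ P j \ S, (V i (insert x S) - V i S) ≤ μ / 3 + V i S := by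
    have h1 : (n : ℝ) * (∑ x ∈ P j \ S, (V i (insert x S) - V i S)) ≤
        ((n - 1 : ℕ) : ℝ) * (μ / 3 + V i S) := by
      rw [hsumP] at hnW
      exact hnW.trans hC
    have h2 : ((n - 1 : ℕ) : ℝ) ≤ (n : ℝ) := by
      exact_mod_cast Nat.sub_le n 1
    have h3 : 0 ≤ μ / 3 + V i S := by linarith
    have hn' : (0 : ℝ) < n := by exact_mod_cast hn
    have h4 : (n : ℝ) * (∑ x ∈ P j \ S, (V i (insert x S) - V i S)) ≤
        (n : ℝ) * (μ / 3 + V i S) := h1.trans (mul_le_mul_of_nonneg_right h2 h3)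
    exact le_of_mul_le_mul_left h4 hn'
  have hμP : μ ≤ V i (P j) := by
    rw [hμ, hPval]
    exact ciInf_le (Set.finite_range _).bddBelow j
  have hcover : P j ⊆ S ∪ (P j \ S) := by
    intro y hy
    by_cases h : y ∈ S
    · exact Finset.mem_union_left _ h
    · exact Finset.mem_union_right _ (Finset.mem_sdiff.mpr ⟨hy, h⟩)
  have hms := marg_sum (hmono i) (hsubm i) S (P j \ S)
  have hchain : μ ≤ V i S + (μ / 3 + V i S) := by
    calc μ ≤ V i (P j) := hμP
      _ ≤ V i (S ∪ (P j \ S)) := hmono i _ _ hcover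
      _ ≤ V i S + ∑ x ∈ P j \ S, (V i (insert x S) - V i S) := hms
      _ ≤ V i S + (μ / 3 + V i S) := by linarith
  linarith

end Greedy


section Main
variable {ι : Type*} [Fintype ι] [DecidableEq ι]

lemma main_lemma :
    ∀ n : ℕ, 1 ≤ n → ∀ (M : Finset ι) (V : Fin n → Finset ι → ℝ),
      (∀ i, V i ∅ = 0) → (∀ i (S : Finset ι), 0 ≤ V i S) →
      (∀ i, ∀ S T : Finset ι, S ⊆ T → V i S ≤ V i T) →
      (∀ i, Submodular (V i)) →
      ∃ A : Fin n → Finset ι, IsPartition M A ∧ ∀ i, MMS M (V i) n / 3 ≤ V i (A i) := by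
  intro n hn
  induction n, hn using Nat.le_induction with
  | base =>
    intro M V hzero hnonneg hmono hsubm
    refine ⟨fun _ => M, ⟨?_, ?_⟩, ?_⟩
    · intro i j hij
      exact absurd (Subsingleton.elim i j) hij
    · ext y
      simp
    · intro i
      have h1 : MMS M (V i) 1 ≤ V i M := MMS_le_self one_pos (hmono i)
      have h0 : 0 ≤ MMS M (V i) 1 := MMS_nonneg M one_pos (hnonneg i)
      linarith
  | succ n hn ih =>
    intro M V hzero hnonneg hmono hsubm
    by_cases hbig : ∃ i : Fin (n + 1), ∃ x ∈ M, MMS M (V i) (n + 1) / 3 ≤ V i {x}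
    · obtain ⟨i, x, hxM, hxval⟩ := hbig
      obtain ⟨A', hA'part, hA'val⟩ := ih (M.erase x) (fun k => V (i.succAbove k))
        (fun k => hzero _) (fun k S => hnonneg _ S) (fun k => hmono _) (fun k => hsubm _)
      have hA'sub : ∀ k, A' k ⊆ M.erase x := fun k => part_subset hA'part k
      refine ⟨i.insertNth {x} A', ⟨?_, ?_⟩, ?_⟩
      · intro j k hjk
        rcases eq_or_ne j i with rfl | hj
        · obtain ⟨k', rfl⟩ := Fin.exists_succAbove_eq (Ne.symm hjk)
          rw [Fin.insertNth_apply_same, Fin.insertNth_apply_succAbove]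
          rw [Finset.disjoint_singleton_left]
          intro hmem
          exact Finset.notMem_erase x M (hA'sub k' hmem)
        · obtain ⟨j', rfl⟩ := Fin.exists_succAbove_eq hj
          rcases eq_or_ne k i with rfl | hk
          · rw [Fin.insertNth_apply_same, Fin.insertNth_apply_succAbove]
            rw [Finset.disjoint_singleton_right]
            intro hmem
            exact Finset.notMem_erase x M (hA'sub j' hmem)
          · obtain ⟨k', rfl⟩ := Fin.exists_succAbove_eq hk
            rw [Fin.insertNth_apply_succAbove, Fin.insertNth_apply_succAbove]
            exact hA'part.1 j' k' (fun h => hjk (congrArg i.succAbove h))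
      · ext y
        simp only [Finset.mem_biUnion, Finset.mem_univ, true_and]
        constructor
        · rintro ⟨j, hj⟩
          rcases eq_or_ne j i with rfl | hji
          · rw [Fin.insertNth_apply_same] at hj
            rw [Finset.mem_singleton.mp hj]
            exact hxM
          · obtain ⟨j', rfl⟩ := Fin.exists_succAbove_eq hji
            rw [Fin.insertNth_apply_succAbove] at hj
            exact Finset.mem_of_mem_erase (hA'sub j' hj)
        · intro hy
          rcases eq_or_ne y x with rfl | hyx
          · exact ⟨i, by rw [Fin.insertNth_apply_same]; exact Finset.mem_singleton_self y⟩
          · have : y ∈ Finset.univ.biUnion A' := by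
              rw [hA'part.2]
              exact Finset.mem_erase.mpr ⟨hyx, hy⟩
            obtain ⟨k, -, hk⟩ := Finset.mem_biUnion.mp this
            exact ⟨i.succAbove k, by rw [Fin.insertNth_apply_succAbove]; exact hk⟩
      · intro j
        rcases eq_or_ne j i with rfl | hji
        · rw [Fin.insertNth_apply_same]
          exact hxval
        · obtain ⟨k, rfl⟩ := Fin.exists_succAbove_eq hji
          rw [Fin.insertNth_apply_succAbove]
          refine le_trans ?_ (hA'val k)
          have := MMS_le_erase hn hxM (hmono (i.succAbove k))
          linarith
    · push_neg at hbig
      exact phase2 (Nat.succ_pos n) M V hzero hnonneg hmono hsubm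
        (fun i x hx => le_of_lt (hbig i x hx))

end Main

/-- For any number `n ≥ 1` of agents with monotone, nonnegative, normalized submodular
valuations, there is an allocation giving every agent at least `1/3` of her maximin share. -/
theorem exists_one_third_MMS_allocation_submodular {ι : Type*} [Fintype ι] [DecidableEq ι]
    {n : ℕ} (hn : 1 ≤ n) (V : Fin n → Finset ι → ℝ)
    (hzero : ∀ i, V i ∅ = 0)
    (hnonneg : ∀ i (S : Finset ι), 0 ≤ V i S)
    (hmono : ∀ i, ∀ S T : Finset ι, S ⊆ T → V i S ≤ V i T)
    (hsubm : ∀ i, Submodular (V i)) :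
    ∃ A : Fin n → Finset ι, IsPartition (Finset.univ : Finset ι) A ∧
      ∀ i, (1 / 3 : ℝ) * MMS Finset.univ (V i) n ≤ V i (A i) := by
  obtain ⟨A, hApart, hAval⟩ :=
    main_lemma n hn (Finset.univ : Finset ι) V hzero hnonneg hmono hsubm
  refine ⟨A, hApart, fun i => ?_⟩
  have := hAval i
  linarith
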